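/- Let (Z_n) and (Z̃_n) be sequences of real random variables with |Z_n - Z̃_n| = O_P(r_n) for a sequence r_n → 0, and assume each Z̃_n satisfies the anti-concentration bound P(|Z̃_n - t| ≤ ε) ≤ C(1 ∨ E Z̃_n) ε for all t, ε > 0 with a uniform constant C, and r_n · E Z̃_n → 0, E Z̃_n ≥ 0. Then sup_{t ∈ ℝ} |P(Z_n ≤ t) - P(Z̃_n ≤ t)| → 0. -/

import Mathlib

open MeasureTheory Filter

theorem stmt_10 {Ω : ℕ → Type*} [∀ n, MeasurableSpace (Ω n)]
    (P : ∀ n, Measure (Ω n)) [∀ n, IsProbabilityMeasure (P n)]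
    (Z Zt : ∀ n, Ω n → ℝ)
    (hZ : ∀ n, Measurable (Z n)) (hZt : ∀ n, Measurable (Zt n))
    (r : ℕ → ℝ) (hr : ∀ n, 0 < r n) (hr0 : Tendsto r atTop (nhds 0))
    (hOP : ∀ δ > (0:ℝ), ∃ M N : ℕ, ∀ n ≥ N,
      ((P n) {ω | M * r n < |Z n ω - Zt n ω|}).toReal < δ)
    (C : ℝ) (hC : 0 < C)
    (hEnonneg : ∀ n, 0 ≤ ∫ ω, Zt n ω ∂(P n))
    (hAC : ∀ (n : ℕ) (t ε : ℝ), 0 < ε →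
      (P n) {ω | |Zt n ω - t| ≤ ε} ≤
        ENNReal.ofReal (C * (1 ⊔ ∫ ω, Zt n ω ∂(P n)) * ε))
    (hrE : Tendsto (fun n => r n * ∫ ω, Zt n ω ∂(P n)) atTop (nhds 0)) :
    Tendsto (fun n => ⨆ t : ℝ,
        |((P n) {ω | Z n ω ≤ t}).toReal - ((P n) {ω | Zt n ω ≤ t}).toReal|)
      atTop (nhds 0) := by
  rw [NormedAddCommGroup.tendsto_nhds_zero]
  intro ε hε
  obtain ⟨M₀, N₀, hMN⟩ := hOP (ε/3) (by linarith)
  set M : ℝ := (M₀ : ℝ) + 1 with hMdef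
  have hM0 : (0:ℝ) < M := by positivity
  have hmax : Tendsto (fun n => C * M * (r n ⊔ r n * ∫ ω, Zt n ω ∂(P n)))
      atTop (nhds 0) := by
    have h := hr0.max hrE
    rw [max_self] at h
    simpa using h.const_mul (C * M)
  have hev : ∀ᶠ n in atTop, C * M * (r n ⊔ r n * ∫ ω, Zt n ω ∂(P n)) < ε/3 :=
    hmax.eventually (gt_mem_nhds (by linarith))
  filter_upwards [hev, eventually_ge_atTop N₀] with n hn hnN
  have hrn := hr n
  have hMr : 0 < M * r n := mul_pos hM0 hrn
  have hd : ((P n) {ω | M * r n < |Z n ω - Zt n ω|}).toReal < ε/3 := by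
    refine lt_of_le_of_lt ?_ (hMN n hnN)
    refine ENNReal.toReal_mono (measure_ne_top _ _) (measure_mono ?_)
    intro ω hω
    have h1 : (M₀:ℝ) ≤ M := by simp [hMdef]
    have h2 : (M₀:ℝ) * r n ≤ M * r n := by nlinarith
    exact lt_of_le_of_lt h2 hω
  have key : ∀ t : ℝ,
      |((P n) {ω | Z n ω ≤ t}).toReal - ((P n) {ω | Zt n ω ≤ t}).toReal|
        ≤ 2 * (ε / 3) := by
    intro t
    set E : ℝ := ∫ ω, Zt n ω ∂(P n) with hEdef
    set A := {ω | Z n ω ≤ t} with hA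
    set B := {ω | Zt n ω ≤ t} with hB
    set Cs := {ω | |Zt n ω - t| ≤ M * r n} with hCs
    set D := {ω | M * r n < |Z n ω - Zt n ω|} with hD
    have hc : ((P n) Cs).toReal ≤ C * M * (r n ⊔ r n * E) := by
      have h1 := hAC n t (M * r n) hMr
      have hEnn : (0:ℝ) ≤ 1 ⊔ E := le_trans zero_le_one (le_max_left _ _)
      have hnn : 0 ≤ C * (1 ⊔ E) * (M * r n) := by positivity
      have h4 := ENNReal.toReal_le_of_le_ofReal hnn h1
      have h5 : C * (1 ⊔ E) * (M * r n) = C * M * (r n ⊔ r n * E) := by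
        rcases le_total 1 E with h | h
        · rw [max_eq_right h, max_eq_right (by nlinarith)]; ring
        · rw [max_eq_left h, max_eq_left (by nlinarith)]; ring
      rwa [h5] at h4
    have hsub1 : A ⊆ B ∪ Cs ∪ D := by
      intro ω hω
      have hz : Z n ω ≤ t := hω
      rcases le_or_gt (|Z n ω - Zt n ω|) (M * r n) with h | h
      · rcases le_or_gt (Zt n ω) t with h2 | h2
        · exact Or.inl (Or.inl h2)
        · refine Or.inl (Or.inr ?_)
          show |Zt n ω - t| ≤ M * r n
          rw [abs_le] at h ⊢
          obtain ⟨h3, h4⟩ := h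
          constructor <;> linarith
      · exact Or.inr h
    have hsub2 : B ⊆ A ∪ Cs ∪ D := by
      intro ω hω
      have hzt : Zt n ω ≤ t := hω
      rcases le_or_gt (|Z n ω - Zt n ω|) (M * r n) with h | h
      · rcases le_or_gt (|Zt n ω - t|) (M * r n) with h2 | h2
        · exact Or.inl (Or.inr h2)
        · refine Or.inl (Or.inl ?_)
          show Z n ω ≤ t
          rw [abs_le] at h
          have h3 : M * r n < t - Zt n ω := by
            rcases lt_abs.mp h2 with h3 | h3
            · linarith
            · linarith
          linarith [h.1, h.2]
      · exact Or.inr h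
    have hm1 : (P n) A ≤ (P n) B + (P n) Cs + (P n) D :=
      (measure_mono hsub1).trans ((measure_union_le _ _).trans
        (add_le_add_left (measure_union_le _ _) _))
    have hm2 : (P n) B ≤ (P n) A + (P n) Cs + (P n) D :=
      (measure_mono hsub2).trans ((measure_union_le _ _).trans
        (add_le_add_left (measure_union_le _ _) _))
    have hfin : ∀ (S T U : Set (Ω n)),
        ((P n) S + (P n) T + (P n) U) ≠ ⊤ := fun S T U =>
      ENNReal.add_ne_top.2 ⟨ENNReal.add_ne_top.2
        ⟨measure_ne_top _ _, measure_ne_top _ _⟩, measure_ne_top _ _⟩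
    have ht1 : ((P n) A).toReal ≤
        ((P n) B).toReal + ((P n) Cs).toReal + ((P n) D).toReal := by
      have h := ENNReal.toReal_mono (hfin B Cs D) hm1
      rwa [ENNReal.toReal_add (ENNReal.add_ne_top.2
          ⟨measure_ne_top _ _, measure_ne_top _ _⟩) (measure_ne_top _ _),
        ENNReal.toReal_add (measure_ne_top _ _) (measure_ne_top _ _)] at h
    have ht2 : ((P n) B).toReal ≤
        ((P n) A).toReal + ((P n) Cs).toReal + ((P n) D).toReal := by
      have h := ENNReal.toReal_mono (hfin A Cs D) hm2
      rwa [ENNReal.toReal_add (ENNReal.add_ne_top.2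
          ⟨measure_ne_top _ _, measure_ne_top _ _⟩) (measure_ne_top _ _),
        ENNReal.toReal_add (measure_ne_top _ _) (measure_ne_top _ _)] at h
    have hcε : ((P n) Cs).toReal < ε/3 := lt_of_le_of_lt hc hn
    exact abs_le.mpr ⟨by linarith, by linarith⟩
  have bdd : BddAbove (Set.range fun t : ℝ =>
      |((P n) {ω | Z n ω ≤ t}).toReal - ((P n) {ω | Zt n ω ≤ t}).toReal|) :=
    ⟨2 * (ε/3), by rintro x ⟨t, rfl⟩; exact key t⟩
  have hsup_le : (⨆ t : ℝ,
      |((P n) {ω | Z n ω ≤ t}).toReal - ((P n) {ω | Zt n ω ≤ t}).toReal|)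
        ≤ 2 * (ε/3) := ciSup_le key
  have hsup_nonneg : 0 ≤ ⨆ t : ℝ,
      |((P n) {ω | Z n ω ≤ t}).toReal - ((P n) {ω | Zt n ω ≤ t}).toReal| :=
    le_trans (abs_nonneg _) (le_ciSup bdd 0)
  rw [Real.norm_eq_abs, abs_of_nonneg hsup_nonneg]
  linarith
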